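/- (Reduction Lemma I) Every nonzero element x ∈ M_ℤ is equivalent to a diagonal reduced element under a product of elementary transformations: there exists g in the subgroup generated by {φ(C), ψ(D), τ : C, D ∈ J_ℤ} ∪ {T(P,Q) : P, Q ∈ GL₃(ℤ), det(P) = det(Q)} ∪ {T(t)} such that g(x) is diagonal reduced. -/

import Mathlib

open Matrix

namespace FreudenthalZ

/-- The integral cubic Jordan algebra `J_ℤ = M₃(ℤ)`. -/
abbrev MatZ := Matrix (Fin 3) (Fin 3) ℤ

/-- The trace bilinear form `(A, B) = tr(A·B)`. -/
def tb (A B : MatZ) : ℤ := (A * B).trace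

/-- The Freudenthal cross product `A × B = (A+B)# − A# − B#` (adjoint = adjugate). -/
def cross (A B : MatZ) : MatZ := (A + B).adjugate - A.adjugate - B.adjugate

/-- The integral Freudenthal module `M_ℤ = ℤ ⊕ ℤ ⊕ J_ℤ ⊕ J_ℤ`, elements `(α, β, A, B)`. -/
abbrev MZ := ℤ × ℤ × MatZ × MatZ

/-- The quartic norm `q'(x) = ((A,B) − αβ)² − 4(A#,B#) + 4α·det A + 4β·det B`. -/
def qz (x : MZ) : ℤ :=
  (tb x.2.2.1 x.2.2.2 - x.1 * x.2.1) ^ 2 - 4 * tb x.2.2.1.adjugate x.2.2.2.adjugate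
    + 4 * x.1 * x.2.2.1.det + 4 * x.2.1 * x.2.2.2.det

/-- The symplectic form `{x, y} = αδ − βγ + (A,D) − (B,C)`. -/
def symp (x y : MZ) : ℤ :=
  x.1 * y.2.1 - x.2.1 * y.1 + tb x.2.2.1 y.2.2.2 - tb x.2.2.2 y.2.2.1

/-- Membership in the group `G_ℤ`: `ℤ`-linear automorphisms of `M_ℤ`
preserving the quartic norm `q'` and the symplectic form `{·,·}`. -/
def InG (g : MZ → MZ) : Prop :=
  IsLinearMap ℤ g ∧ Function.Bijective g ∧
    (∀ x, qz (g x) = qz x) ∧ (∀ x y, symp (g x) (g y) = symp x y)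

/-- `x` is projective: some `g ∈ G_ℤ` maps `x` to a diagonal reduced element
`(α, β, diag(a₁,a₂,a₃), 0)` (`α > 0`, `α ∣ β`, `α ∣ aᵢ`) satisfying the three gcd
conditions `gcd(α·aᵢ, α·β, aⱼ·a_k) = 1`. -/
def Projective (x : MZ) : Prop :=
  ∃ g : MZ → MZ, InG g ∧ ∃ α β a₁ a₂ a₃ : ℤ,
    g x = (α, β, Matrix.diagonal ![a₁, a₂, a₃], 0) ∧
    0 < α ∧ α ∣ β ∧ α ∣ a₁ ∧ α ∣ a₂ ∧ α ∣ a₃ ∧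
    Int.gcd (Int.gcd (α * a₁) (α * β)) (a₂ * a₃) = 1 ∧
    Int.gcd (Int.gcd (α * a₂) (α * β)) (a₃ * a₁) = 1 ∧
    Int.gcd (Int.gcd (α * a₃) (α * β)) (a₁ * a₂) = 1

end FreudenthalZ

open FreudenthalZ

namespace FreudenthalZ

/-- The elementary transformation
`φ(C) : (α,β,A,B) ↦ (α + (B,C) + (A,C#) + β·det C, β, A + βC, B + A×C + βC#)`. -/
def phiMap (C : MatZ) (x : MZ) : MZ :=
  (x.1 + tb x.2.2.2 C + tb x.2.2.1 C.adjugate + x.2.1 * C.det,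
   x.2.1,
   x.2.2.1 + x.2.1 • C,
   x.2.2.2 + cross x.2.2.1 C + x.2.1 • C.adjugate)

/-- The elementary transformation
`ψ(D) : (α,β,A,B) ↦ (α, β + (A,D) + (B,D#) + α·det D, A + B×D + αD#, B + αD)`. -/
def psiMap (D : MatZ) (x : MZ) : MZ :=
  (x.1,
   x.2.1 + tb x.2.2.1 D + tb x.2.2.2 D.adjugate + x.1 * D.det,
   x.2.2.1 + cross x.2.2.2 D + x.1 • D.adjugate,
   x.2.2.2 + x.1 • D)

/-- The elementary transformation `τ : (α,β,A,B) ↦ (−β, α, −B, A)`. -/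
def tauMap (x : MZ) : MZ := (-x.2.1, x.1, -x.2.2.2, x.2.2.1)

/-- The elementary transformation
`T(P,Q) : (α,β,A,B) ↦ (ε·α, ε·β, P A Q⁻¹, Q B P⁻¹)` with `ε = det P · det Q`. -/
def Tmap (P Q : GL (Fin 3) ℤ) (x : MZ) : MZ :=
  ((P : MatZ).det * (Q : MatZ).det * x.1,
   (P : MatZ).det * (Q : MatZ).det * x.2.1,
   (P : MatZ) * x.2.2.1 * ((Q⁻¹ : GL (Fin 3) ℤ) : MatZ),
   (Q : MatZ) * x.2.2.2 * ((P⁻¹ : GL (Fin 3) ℤ) : MatZ))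

/-- The elementary transformation `T(t) : (α,β,A,B) ↦ (α, β, Aᵀ, Bᵀ)`. -/
def Ttr (x : MZ) : MZ := (x.1, x.2.1, x.2.2.1ᵀ, x.2.2.2ᵀ)

/-- An element of `M_ℤ` is diagonal reduced if it has the form
`(α, β, diag(a₁,a₂,a₃), 0)` with `α > 0`, `α ∣ β` and `α ∣ aᵢ`. -/
def DiagReduced (x : MZ) : Prop :=
  ∃ α β a₁ a₂ a₃ : ℤ, x = (α, β, Matrix.diagonal ![a₁, a₂, a₃], 0) ∧
    0 < α ∧ α ∣ β ∧ α ∣ a₁ ∧ α ∣ a₂ ∧ α ∣ a₃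

/-- Finite products of the elementary transformations `φ(C)`, `ψ(D)`, `τ`,
`T(P,Q)` (with `det P = det Q`) and `T(t)`. -/
inductive ZWord : (MZ → MZ) → Prop
  | phi (C : MatZ) : ZWord (phiMap C)
  | psi (D : MatZ) : ZWord (psiMap D)
  | tau : ZWord tauMap
  | tmap (P Q : GL (Fin 3) ℤ) (h : (P : MatZ).det = (Q : MatZ).det) : ZWord (Tmap P Q)
  | ttr : ZWord Ttr
  | comp {g h : MZ → MZ} : ZWord g → ZWord h → ZWord (g ∘ h)

end FreudenthalZ

namespace FreudenthalZ
def Tv (i j : Fin 3) (c : ℤ) : MatZ := 1 + single i j c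

lemma Tv_mul_Tv (i j : Fin 3) (h : i ≠ j) (c : ℤ) : Tv i j c * Tv i j (-c) = 1 := by
  simp only [Tv, add_mul, mul_add, one_mul, mul_one]
  rw [Matrix.single_mul_single_of_ne (h := Ne.symm h) (d := -c)]
  rw [add_zero, add_assoc, ← Matrix.single_add]
  simp

def TvU (i j : Fin 3) (h : i ≠ j) (c : ℤ) : MatZ ˣ :=
  ⟨Tv i j c, Tv i j (-c), Tv_mul_Tv i j h c, by simpa using Tv_mul_Tv i j h (-c)⟩

lemma mul_Tv_apply (A : MatZ) (i j : Fin 3) (c : ℤ) (k l : Fin 3) :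
    (A * Tv i j c) k l = A k l + (if l = j then A k i * c else 0) := by
  simp only [Tv, mul_add, mul_one, Matrix.add_apply]
  by_cases h : l = j
  · subst h; simp
  · simp [h]

lemma Tv_mul_apply (A : MatZ) (i j : Fin 3) (c : ℤ) (k l : Fin 3) :
    (Tv i j c * A) k l = A k l + (if k = i then c * A j l else 0) := by
  simp only [Tv, add_mul, one_mul, Matrix.add_apply]
  by_cases h : k = i
  · subst h; simp
  · simp [h]

def negM : MatZ := Matrix.diagonal ![-1, 1, 1]

def negU : MatZ ˣ := ⟨negM, negM, by decide, by decide⟩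

lemma negM_mul_apply (A : MatZ) (k l : Fin 3) :
    (negM * A) k l = (if k = 0 then -A k l else A k l) := by
  rw [negM, Matrix.diagonal_mul]
  fin_cases k <;> simp

def swM : Fin 3 → MatZ
  | 0 => !![0,1,0;1,0,0;0,0,1]
  | 1 => !![0,0,1;0,1,0;1,0,0]
  | 2 => !![1,0,0;0,0,1;0,1,0]

def swP : Fin 3 → (Fin 3 → Fin 3)
  | 0 => ![1,0,2]
  | 1 => ![2,1,0]
  | 2 => ![0,2,1]

def swU (m : Fin 3) : MatZ ˣ :=
  ⟨swM m, swM m, by fin_cases m <;> decide, by fin_cases m <;> decide⟩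

lemma mul_sw_apply (A : MatZ) (m : Fin 3) (k l : Fin 3) :
    (A * swM m) k l = A k (swP m l) := by
  fin_cases m <;> fin_cases l <;>
    simp [swM, swP, Matrix.mul_apply, Fin.sum_univ_three, Matrix.vecHead, Matrix.vecTail]

lemma sw_mul_apply (A : MatZ) (m : Fin 3) (k l : Fin 3) :
    (swM m * A) k l = A (swP m k) l := by
  fin_cases m <;> fin_cases k <;>
    simp [swM, swP, Matrix.mul_apply, Fin.sum_univ_three, Matrix.vecHead, Matrix.vecTail]

-- === Red relation ===
def Red (A B : MatZ) : Prop := ∃ P Q : MatZ ˣ, B = P.val * A * Q.val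

lemma Red.refl (A : MatZ) : Red A A := ⟨1, 1, by simp⟩

lemma Red.trans {A B C : MatZ} (h1 : Red A B) (h2 : Red B C) : Red A C := by
  obtain ⟨P, Q, rfl⟩ := h1; obtain ⟨P', Q', rfl⟩ := h2
  exact ⟨P' * P, Q * Q', by simp [Units.val_mul, Matrix.mul_assoc]⟩

lemma Red.mulLeft (U : MatZ ˣ) (A : MatZ) : Red A (U.val * A) := ⟨U, 1, by simp⟩

lemma Red.mulRight (U : MatZ ˣ) (A : MatZ) : Red A (A * U.val) := ⟨1, U, by simp [Matrix.mul_assoc]⟩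

-- === arithmetic helper ===
lemma emod_facts {a b : ℤ} (hb : 0 < b) (hnd : ¬ b ∣ a) :
    0 < a % b ∧ (a % b).natAbs < b.natAbs ∧ a % b = a + b * (-(a / b)) := by
  have h1 : 0 ≤ a % b := Int.emod_nonneg a (by omega)
  have h2 : a % b < b := Int.emod_lt_of_pos a hb
  have h3 : a % b ≠ 0 := fun h => hnd (Int.dvd_of_emod_eq_zero h)
  have h4 : b * (a / b) + a % b = a := Int.mul_ediv_add_emod a b
  refine ⟨by omega, by omega, by rw [Int.emod_def]; ring⟩

def Piv1 (B : MatZ) : Prop := (∀ j, j ≠ 0 → B 0 j = 0) ∧ (∀ i, i ≠ 0 → B i 0 = 0)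

lemma pivot1pos : ∀ (n : ℕ) (A : MatZ), 0 < A 0 0 → (A 0 0).natAbs ≤ n →
    ∃ B, Red A B ∧ Piv1 B := by
  intro n
  induction n with
  | zero => intro A h h0; omega
  | succ n IH =>
    intro A hA hn
    by_cases hcol : ∀ j, A 0 0 ∣ A 0 j
    · by_cases hrow : ∀ i, A 0 0 ∣ A i 0
      · -- clear row 0 and column 0
        set c1 : ℤ := -(A 0 1 / A 0 0) with hc1
        set c2 : ℤ := -(A 0 2 / A 0 0) with hc2
        set M : MatZ := A * Tv 0 1 c1 * Tv 0 2 c2 with hM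
        have hM00 : M 0 0 = A 0 0 := by simp [hM, mul_Tv_apply]
        have hMi0 : ∀ i, M i 0 = A i 0 := by intro i; simp [hM, mul_Tv_apply]
        have hM01 : M 0 1 = 0 := by
          simp [hM, mul_Tv_apply, hc1]
          rw [Int.mul_ediv_cancel' (hcol 1)]; ring
        have hM02 : M 0 2 = 0 := by
          simp [hM, mul_Tv_apply, hc2]
          rw [Int.mul_ediv_cancel' (hcol 2)]; ring
        set d1 : ℤ := -(A 1 0 / A 0 0) with hd1
        set d2 : ℤ := -(A 2 0 / A 0 0) with hd2
        set B : MatZ := Tv 2 0 d2 * (Tv 1 0 d1 * M) with hB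
        refine ⟨B, ⟨TvU 2 0 (by decide) d2 * TvU 1 0 (by decide) d1,
            TvU 0 1 (by decide) c1 * TvU 0 2 (by decide) c2, ?_⟩, ?_, ?_⟩
        · show B = (Tv 2 0 d2 * Tv 1 0 d1) * A * (Tv 0 1 c1 * Tv 0 2 c2)
          rw [hB, hM]; noncomm_ring
        · intro j hj; fin_cases j
          · exact absurd rfl hj
          · simp [hB, Tv_mul_apply, hM01]
          · simp [hB, Tv_mul_apply, hM02]
        · intro i hi; fin_cases i
          · exact absurd rfl hi
          · simp [hB, Tv_mul_apply, hMi0, hM00, hd1]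
            rw [Int.ediv_mul_cancel (hrow 1)]; ring
          · simp [hB, Tv_mul_apply, hMi0, hM00, hd2]
            rw [Int.ediv_mul_cancel (hrow 2)]; ring
      · -- some column entry not divisible: reduce pivot
        push_neg at hrow
        obtain ⟨i, hi⟩ := hrow
        have hine : i ≠ 0 := by rintro rfl; exact hi dvd_rfl
        obtain ⟨hr1, hr2, hr3⟩ := emod_facts hA hi
        set q : ℤ := -(A i 0 / A 0 0) with hq
        -- row i ← row i + q ⬝ row 0, then swap rows 0 i
        have key : ∀ m : Fin 3, swP m 0 = i →
            ∃ B, Red A B ∧ Piv1 B := by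
          intro m hm
          set M : MatZ := swM m * (Tv i 0 q * A) with hMdef
          have hM00 : M 0 0 = A i 0 % A 0 0 := by
            rw [hMdef, sw_mul_apply, hm, Tv_mul_apply, if_pos rfl, hq, hr3]; try ring
          have : ∃ B, Red M B ∧ Piv1 B := by
            apply IH M (by rw [hM00]; exact hr1) (by rw [hM00]; omega)
          obtain ⟨B, hMB, hPiv⟩ := this
          refine ⟨B, Red.trans ?_ hMB, hPiv⟩
          exact Red.trans (Red.mulLeft (TvU i 0 hine q) A) (Red.mulLeft (swU m) _)
        fin_cases i
        · exact absurd rfl hine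
        · exact key 0 rfl
        · exact key 1 rfl
    · -- some row-0 entry not divisible
      push_neg at hcol
      obtain ⟨j, hj⟩ := hcol
      have hjne : j ≠ 0 := by rintro rfl; exact hj dvd_rfl
      obtain ⟨hr1, hr2, hr3⟩ := emod_facts hA hj
      set q : ℤ := -(A 0 j / A 0 0) with hq
      have key : ∀ m : Fin 3, swP m 0 = j → ∃ B, Red A B ∧ Piv1 B := by
        intro m hm
        set M : MatZ := (A * Tv 0 j q) * swM m with hMdef
        have hM00 : M 0 0 = A 0 j % A 0 0 := by
          rw [hMdef, mul_sw_apply, hm, mul_Tv_apply, if_pos rfl, hq, hr3]; try ring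
        have : ∃ B, Red M B ∧ Piv1 B := by
          apply IH M (by rw [hM00]; exact hr1) (by rw [hM00]; omega)
        obtain ⟨B, hMB, hPiv⟩ := this
        refine ⟨B, Red.trans ?_ hMB, hPiv⟩
        exact Red.trans (Red.mulRight (TvU 0 j (Ne.symm hjne) q) A) (Red.mulRight (swU m) _)
      fin_cases j
      · exact absurd rfl hjne
      · exact key 0 rfl
      · exact key 1 rfl

lemma pivot1 (A : MatZ) (hA : A 0 0 ≠ 0) : ∃ B, Red A B ∧ Piv1 B := by
  rcases lt_or_gt_of_ne hA with h | h
  · have h' : 0 < (negM * A) 0 0 := by rw [negM_mul_apply]; simp; omega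
    obtain ⟨B, hred, hpiv⟩ := pivot1pos ((negM * A) 0 0).natAbs _ h' le_rfl
    exact ⟨B, Red.trans (Red.mulLeft negU A) hred, hpiv⟩
  · exact pivot1pos (A 0 0).natAbs A h le_rfl

lemma stage1 (A : MatZ) : ∃ B, Red A B ∧ Piv1 B := by
  by_cases h00 : A 0 0 ≠ 0
  · exact pivot1 A h00
  · push_neg at h00
    by_cases h01 : A 0 1 ≠ 0
    · obtain ⟨B, hred, hpiv⟩ := pivot1 (A * swM 0) (by rw [mul_sw_apply]; exact h01)
      exact ⟨B, Red.trans (Red.mulRight (swU 0) A) hred, hpiv⟩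
    by_cases h02 : A 0 2 ≠ 0
    · obtain ⟨B, hred, hpiv⟩ := pivot1 (A * swM 1) (by rw [mul_sw_apply]; exact h02)
      exact ⟨B, Red.trans (Red.mulRight (swU 1) A) hred, hpiv⟩
    by_cases h10 : A 1 0 ≠ 0
    · obtain ⟨B, hred, hpiv⟩ := pivot1 (swM 0 * A) (by rw [sw_mul_apply]; exact h10)
      exact ⟨B, Red.trans (Red.mulLeft (swU 0) A) hred, hpiv⟩
    by_cases h20 : A 2 0 ≠ 0
    · obtain ⟨B, hred, hpiv⟩ := pivot1 (swM 1 * A) (by rw [sw_mul_apply]; exact h20)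
      exact ⟨B, Red.trans (Red.mulLeft (swU 1) A) hred, hpiv⟩
    push_neg at h01 h02 h10 h20
    refine ⟨A, Red.refl A, fun j hj => ?_, fun i hi => ?_⟩
    · fin_cases j
      · exact absurd rfl hj
      · simpa using h01
      · simpa using h02
    · fin_cases i
      · exact absurd rfl hi
      · simpa using h10
      · simpa using h20

def negM2 : MatZ := Matrix.diagonal ![1, -1, 1]

def negU2 : MatZ ˣ := ⟨negM2, negM2, by decide, by decide⟩

lemma negM2_mul_apply (A : MatZ) (k l : Fin 3) :
    (negM2 * A) k l = (if k = 1 then -A k l else A k l) := by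
  rw [negM2, Matrix.diagonal_mul]
  fin_cases k <;> simp

lemma piv_swL {A : MatZ} (h : Piv1 A) : Piv1 (swM 2 * A) := by
  constructor
  · intro j hj; rw [sw_mul_apply]
    exact h.1 j hj
  · intro i hi; rw [sw_mul_apply]
    refine h.2 _ ?_
    fin_cases i
    · exact absurd rfl hi
    · decide
    · decide

lemma piv_swR {A : MatZ} (h : Piv1 A) : Piv1 (A * swM 2) := by
  constructor
  · intro j hj; rw [mul_sw_apply]
    refine h.1 _ ?_
    fin_cases j
    · exact absurd rfl hj
    · decide
    · decide
  · intro i hi; rw [mul_sw_apply]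
    exact h.2 i hi

lemma swP20 : swP 2 0 = 0 := by decide
lemma swP21 : swP 2 1 = 2 := by decide
lemma swP22 : swP 2 2 = 1 := by decide

lemma pivot2pos : ∀ (n : ℕ) (A : MatZ), Piv1 A → 0 < A 1 1 → (A 1 1).natAbs ≤ n →
    ∃ B, Red A B ∧ Piv1 B ∧ B 1 2 = 0 ∧ B 2 1 = 0 := by
  intro n
  induction n with
  | zero => intro A _ h h0; omega
  | succ n IH =>
    intro A hPiv hA hn
    by_cases hcol : A 1 1 ∣ A 1 2
    · by_cases hrow : A 1 1 ∣ A 2 1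
      · set c : ℤ := -(A 1 2 / A 1 1) with hc
        set d : ℤ := -(A 2 1 / A 1 1) with hd
        set B : MatZ := Tv 2 1 d * (A * Tv 1 2 c) with hB
        have hBe : ∀ k l, B k l = (A k l + (if l = 2 then A k 1 * c else 0))
            + (if k = 2 then d * (A 1 l + (if l = 2 then A 1 1 * c else 0)) else 0) := by
          intro k l
          rw [hB, Tv_mul_apply, mul_Tv_apply, mul_Tv_apply]
        have e10 : A 1 0 = 0 := hPiv.2 1 (by decide)
        have e20 : A 2 0 = 0 := hPiv.2 2 (by decide)
        have e01 : A 0 1 = 0 := hPiv.1 1 (by decide)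
        have e02 : A 0 2 = 0 := hPiv.1 2 (by decide)
        refine ⟨B, ⟨TvU 2 1 (by decide) d, TvU 1 2 (by decide) c, by
          show B = Tv 2 1 d * A * Tv 1 2 c; rw [hB]; noncomm_ring⟩, ⟨?_, ?_⟩, ?_, ?_⟩
        · intro j hj
          fin_cases j
          · exact absurd rfl hj
          · rw [hBe]; simp [e01]
          · rw [hBe]; simp [e01, e02]
        · intro i hi
          fin_cases i
          · exact absurd rfl hi
          · rw [hBe]; simp [e10]
          · rw [hBe]; simp [e10, e20]
        · rw [hBe]; simp [hc]
          rw [Int.mul_ediv_cancel' hcol]; ring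
        · rw [hBe]; simp [hd, neg_mul]
          rw [Int.ediv_mul_cancel hrow]; ring
      · obtain ⟨hr1, hr2, hr3⟩ := emod_facts hA hrow
        set q : ℤ := -(A 2 1 / A 1 1) with hq
        set M : MatZ := swM 2 * (Tv 2 1 q * A) with hMdef
        have hMP : Piv1 M := by
          apply piv_swL
          constructor
          · intro j hj; rw [Tv_mul_apply]; simp [hPiv.1 j hj, hPiv.1 1 (by decide)]
          · intro i hi; rw [Tv_mul_apply]
            simp [hPiv.2 i hi, hPiv.2 1 (by decide), hPiv.2 2 (by decide)]
        have hM11 : M 1 1 = A 2 1 % A 1 1 := by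
          rw [hMdef, sw_mul_apply, swP21, Tv_mul_apply, if_pos rfl, hq, hr3]; try ring
        obtain ⟨B, hMB, hPiv', h12, h21⟩ := IH M hMP (by rw [hM11]; exact hr1) (by rw [hM11]; omega)
        refine ⟨B, Red.trans ?_ hMB, hPiv', h12, h21⟩
        exact ⟨swU 2 * TvU 2 1 (by decide) q, 1, by
          show M = (swM 2 * Tv 2 1 q) * A * 1; rw [hMdef]; noncomm_ring⟩
    · obtain ⟨hr1, hr2, hr3⟩ := emod_facts hA hcol
      set q : ℤ := -(A 1 2 / A 1 1) with hq
      set M : MatZ := (A * Tv 1 2 q) * swM 2 with hMdef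
      have hMP : Piv1 M := by
        apply piv_swR
        constructor
        · intro j hj; rw [mul_Tv_apply]
          simp [hPiv.1 j hj, hPiv.1 1 (by decide), hPiv.1 2 (by decide)]
        · intro i hi; rw [mul_Tv_apply]; simp [hPiv.2 i hi]
      have hM11 : M 1 1 = A 1 2 % A 1 1 := by
        rw [hMdef, mul_sw_apply, swP21, mul_Tv_apply, if_pos rfl, hq, hr3]; try ring
      obtain ⟨B, hMB, hPiv', h12, h21⟩ := IH M hMP (by rw [hM11]; exact hr1) (by rw [hM11]; omega)
      refine ⟨B, Red.trans ?_ hMB, hPiv', h12, h21⟩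
      exact ⟨1, TvU 1 2 (by decide) q * swU 2, by
        show M = 1 * A * (Tv 1 2 q * swM 2); rw [hMdef]; noncomm_ring⟩

lemma stage2 (C : MatZ) (hPiv : Piv1 C) :
    ∃ B, Red C B ∧ Piv1 B ∧ B 1 2 = 0 ∧ B 2 1 = 0 := by
  have main : ∀ M : MatZ, Piv1 M → M 1 1 ≠ 0 → ∃ B, Red M B ∧ Piv1 B ∧ B 1 2 = 0 ∧ B 2 1 = 0 := by
    intro M hMP h11
    rcases lt_or_gt_of_ne h11 with h | h
    · have hP' : Piv1 (negM2 * M) := by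
        constructor
        · intro j hj; rw [negM2_mul_apply]; simp [hMP.1 j hj]
        · intro i hi; rw [negM2_mul_apply]; simp [hMP.2 i hi]
      have h' : 0 < (negM2 * M) 1 1 := by rw [negM2_mul_apply]; simp; omega
      obtain ⟨B, hred, h2⟩ := pivot2pos ((negM2 * M) 1 1).natAbs _ hP' h' le_rfl
      exact ⟨B, Red.trans (Red.mulLeft negU2 M) hred, h2⟩
    · exact pivot2pos (M 1 1).natAbs M hMP h le_rfl
  by_cases h11 : C 1 1 ≠ 0
  · exact main C hPiv h11
  push_neg at h11
  by_cases h12 : C 1 2 ≠ 0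
  · obtain ⟨B, hred, h2⟩ := main (C * swM 2) (piv_swR hPiv)
      (by rw [mul_sw_apply, swP21]; exact h12)
    exact ⟨B, Red.trans (Red.mulRight (swU 2) C) hred, h2⟩
  push_neg at h12
  by_cases h21 : C 2 1 ≠ 0
  · obtain ⟨B, hred, h2⟩ := main (swM 2 * C) (piv_swL hPiv)
      (by rw [sw_mul_apply, swP21]; exact h21)
    exact ⟨B, Red.trans (Red.mulLeft (swU 2) C) hred, h2⟩
  push_neg at h21
  exact ⟨C, Red.refl C, hPiv, h12, h21⟩

lemma smith (A : MatZ) : ∃ B, Red A B ∧ ∃ d : Fin 3 → ℤ, B = Matrix.diagonal d := by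
  obtain ⟨C, hAC, hPiv⟩ := stage1 A
  obtain ⟨B, hCB, hP, h12, h21⟩ := stage2 C hPiv
  refine ⟨B, Red.trans hAC hCB, ![B 0 0, B 1 1, B 2 2], ?_⟩
  ext i j
  fin_cases i <;> fin_cases j <;>
    simp [Matrix.diagonal] <;>
    first
      | exact hP.1 1 (by decide) | exact hP.1 2 (by decide)
      | exact hP.2 1 (by decide) | exact hP.2 2 (by decide)
      | exact h12 | exact h21

-- ===== trace-form and cross-product helper lemmas =====


lemma adj_std (i j : Fin 3) (c : ℤ) : (single i j c : MatZ).adjugate = 0 := by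
  ext k l
  rw [Matrix.adjugate_apply]
  obtain ⟨m, hml, hmi⟩ : ∃ m, m ≠ l ∧ m ≠ i := by revert l i; decide
  rw [Matrix.zero_apply]
  refine Matrix.det_eq_zero_of_row_eq_zero m fun r => ?_
  rw [Matrix.updateRow_ne hml]
  simp [Matrix.single, Ne.symm hmi]

lemma det_std (i j : Fin 3) (c : ℤ) : (single i j c : MatZ).det = 0 := by
  obtain ⟨m, hmi⟩ : ∃ m, m ≠ i := by revert i; decide
  refine Matrix.det_eq_zero_of_row_eq_zero m fun r => ?_
  simp [Matrix.single, Ne.symm hmi]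

lemma tb_zero_right (X : MatZ) : tb X 0 = 0 := by simp [tb]

lemma tb_zero_left (X : MatZ) : tb 0 X = 0 := by simp [tb]

lemma tb_comm (X Y : MatZ) : tb X Y = tb Y X := Matrix.trace_mul_comm X Y

lemma tb_std (X : MatZ) (i j : Fin 3) (c : ℤ) :
    tb X (single i j c) = c * X j i := by
  have h : ∀ a : Fin 3, (X * single i j c) a a = if a = j then X a i * c else 0 := by
    intro a; by_cases h : a = j
    · subst h; simp
    · simp [h]
  rw [tb, Matrix.trace]; simp only [Matrix.diag, h]
  simp [Finset.sum_ite_eq', mul_comm]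

lemma tb_std_left (X : MatZ) (i j : Fin 3) (c : ℤ) :
    tb (single i j c) X = c * X j i := by rw [tb_comm, tb_std]

lemma tb_smul_left (c : ℤ) (X Y : MatZ) : tb (c • X) Y = c * tb X Y := by
  rw [tb, tb, Matrix.smul_mul, Matrix.trace_smul, smul_eq_mul]

lemma cross_zero_left (D : MatZ) : cross 0 D = 0 := by simp [cross]

-- ===== existence of adjugate gadgets =====

lemma exists_adjC (i j : Fin 3) :
    ∃ C : MatZ, C.adjugate = single j i 1 ∧ C.det = 0 ∧ ∃ s t : Fin 3, C t s = 1 := by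
  fin_cases i <;> fin_cases j
  · exact ⟨!![0,0,0;0,1,0;0,0,1], by decide, by decide, 1, 1, by decide⟩
  · exact ⟨single 1 2 1 + single 2 0 1, by decide, by decide, 2, 1, by decide⟩
  · exact ⟨single 2 1 1 + single 1 0 1, by decide, by decide, 1, 2, by decide⟩
  · exact ⟨single 0 2 1 + single 2 1 1, by decide, by decide, 2, 0, by decide⟩
  · exact ⟨!![1,0,0;0,0,0;0,0,1], by decide, by decide, 0, 0, by decide⟩
  · exact ⟨single 2 0 1 + single 0 1 1, by decide, by decide, 0, 2, by decide⟩
  · exact ⟨single 0 1 1 + single 1 2 1, by decide, by decide, 1, 0, by decide⟩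
  · exact ⟨single 1 0 1 + single 0 2 1, by decide, by decide, 0, 1, by decide⟩
  · exact ⟨!![1,0,0;0,1,0;0,0,0], by decide, by decide, 0, 0, by decide⟩

-- ===== Smith normal form in GL form =====

lemma det_unit_pm (U : MatZ ˣ) : (U.val).det = 1 ∨ (U.val).det = -1 := by
  have h : (U.val).det * ((U⁻¹).val).det = 1 := by
    rw [← Matrix.det_mul]
    simp
  exact Int.isUnit_iff.mp (IsUnit.of_mul_eq_one _ h)

lemma smithT (A : MatZ) : ∃ P Q : GL (Fin 3) ℤ, ((P : MatZ)).det = ((Q : MatZ)).det ∧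
    ∃ d : Fin 3 → ℤ, (P : MatZ) * A * ((Q⁻¹ : GL (Fin 3) ℤ) : MatZ) = Matrix.diagonal d := by
  obtain ⟨B, ⟨P, Q', hB⟩, d, hdiag⟩ := smith A
  by_cases h : (P.val).det = (((Q'⁻¹ : MatZ ˣ)).val).det
  · refine ⟨P, Q'⁻¹, h, d, ?_⟩
    rw [inv_inv]; rw [← hB]; exact hdiag
  · refine ⟨negU * P, Q'⁻¹, ?_, fun i => (![(-1:ℤ),1,1] i) * d i, ?_⟩
    · rcases det_unit_pm P with h1 | h1 <;> rcases det_unit_pm (Q'⁻¹) with h2 | h2 <;>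
        rw [Units.val_mul, Matrix.det_mul] <;>
        rw [show (negU.val).det = -1 by decide] <;> omega
    · rw [inv_inv, Units.val_mul, Matrix.mul_assoc, Matrix.mul_assoc,
        ← Matrix.mul_assoc (P.val), ← hB, hdiag]
      rw [show negU.val = Matrix.diagonal ![(-1:ℤ),1,1] from rfl, Matrix.diagonal_mul_diagonal]

lemma dvd_PAQ {a : ℤ} {A : MatZ} (h : ∀ k l, a ∣ A k l) (P Q : MatZ) :
    ∀ i j, a ∣ (P * A * Q) i j := by
  intro i j
  rw [Matrix.mul_apply]
  refine Finset.dvd_sum fun l _ => Dvd.dvd.mul_right ?_ _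
  rw [Matrix.mul_apply]
  exact Finset.dvd_sum fun k _ => (h k l).mul_left _

lemma vec3_eta (d : Fin 3 → ℤ) : ![d 0, d 1, d 2] = d := by
  funext i; fin_cases i <;> rfl

-- ===== the Reach relation =====

def Reach (x y : MZ) : Prop := ∃ g, ZWord g ∧ g x = y

lemma Reach.refl (x : MZ) : Reach x x := by
  refine ⟨Tmap 1 1, ZWord.tmap 1 1 rfl, ?_⟩
  simp [Tmap]

lemma Reach.trans {x y z : MZ} (h1 : Reach x y) (h2 : Reach y z) : Reach x z := by
  obtain ⟨g, hg, hgx⟩ := h1; obtain ⟨f, hf, hfy⟩ := h2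
  exact ⟨f ∘ g, ZWord.comp hf hg, by simp [Function.comp, hgx, hfy]⟩

lemma Reach.phi (C : MatZ) (x : MZ) : Reach x (phiMap C x) := ⟨_, ZWord.phi C, rfl⟩
lemma Reach.psi (D : MatZ) (x : MZ) : Reach x (psiMap D x) := ⟨_, ZWord.psi D, rfl⟩
lemma Reach.tau (x : MZ) : Reach x (tauMap x) := ⟨_, ZWord.tau, rfl⟩

lemma phi_first (C : MatZ) (w : MZ) :
    (phiMap C w).1 = w.1 + tb w.2.2.2 C + tb w.2.2.1 C.adjugate + w.2.1 * C.det := rfl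

-- ===== step A : reach a state with nonzero, then positive, first coordinate =====

lemma exists_entry {A : MatZ} (h : A ≠ 0) : ∃ i j, A i j ≠ 0 := by
  by_contra hc; push_neg at hc
  exact h (by ext i j; simpa using hc i j)

lemma reach_nonzero {x : MZ} (hx : x ≠ 0) : ∃ y, Reach x y ∧ y.1 ≠ 0 := by
  obtain ⟨a, b, A, B⟩ := x
  by_cases ha : a ≠ 0
  · exact ⟨_, Reach.refl _, ha⟩
  push_neg at ha; subst ha
  by_cases hb : b ≠ 0
  · exact ⟨tauMap (0, b, A, B), Reach.tau _, neg_ne_zero.mpr hb⟩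
  push_neg at hb; subst hb
  by_cases hA : A ≠ 0
  · obtain ⟨i, j, hij⟩ := exists_entry hA
    refine ⟨_, Reach.trans (Reach.psi (single j i 1) _) (Reach.tau _), ?_⟩
    show -((0:ℤ) + tb A (single j i 1) + tb B (single j i 1).adjugate
      + 0 * (single j i 1).det) ≠ 0
    rw [adj_std, tb_zero_right, tb_std]
    simpa using hij
  push_neg at hA; subst hA
  have hB : B ≠ 0 := by
    rintro rfl; exact hx rfl
  obtain ⟨i, j, hij⟩ := exists_entry hB
  refine ⟨_, Reach.phi (single j i 1) _, ?_⟩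
  show (0:ℤ) + tb B (single j i 1) + tb 0 (single j i 1).adjugate
      + 0 * (single j i 1).det ≠ 0
  rw [tb_zero_left, tb_std]
  simpa using hij

lemma reach_pos {x : MZ} (hx : x ≠ 0) : ∃ y, Reach x y ∧ 0 < y.1 := by
  obtain ⟨y, hy, h0⟩ := reach_nonzero hx
  rcases lt_or_gt_of_ne h0 with h | h
  · refine ⟨tauMap (tauMap y), Reach.trans hy (Reach.trans (Reach.tau y) (Reach.tau _)), ?_⟩
    show 0 < -y.1
    omega
  · exact ⟨y, hy, h⟩

-- ===== descent helper =====

lemma descend {x : MZ} {a : ℤ} (hmin : ∀ z, Reach x z → 0 < z.1 → a ≤ z.1)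
    (ha : 0 < a) {c : ℤ} (hc : ¬ a ∣ c)
    (hz : ∃ z, Reach x z ∧ z.1 = c % a) : False := by
  obtain ⟨z, hzr, hz1⟩ := hz
  have h1 : 0 ≤ c % a := Int.emod_nonneg c (by omega)
  have h2 : c % a < a := Int.emod_lt_of_pos c ha
  have h3 : c % a ≠ 0 := fun h => hc (Int.dvd_of_emod_eq_zero h)
  have := hmin z hzr (by omega)
  omega

-- ===== the three descent steps, at a reachable state of minimal positive first coordinate =====

lemma descentB {x : MZ} {a b : ℤ} {A B : MatZ}
    (hmin : ∀ z, Reach x z → 0 < z.1 → a ≤ z.1) (ha : 0 < a)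
    (hy : Reach x (a, b, A, B)) : ∀ i j, a ∣ B i j := by
  intro i j
  by_contra hnd
  refine descend hmin ha hnd ⟨phiMap (single j i 1)
    (psiMap (single i j (-1 - B i j / a)) (a, b, A, B)),
    Reach.trans hy (Reach.trans (Reach.psi _ _) (Reach.phi _ _)), ?_⟩
  rw [phi_first]
  show a + tb (B + a • single i j (-1 - B i j / a)) (single j i 1)
      + tb _ (single j i 1).adjugate + _ * (single j i 1).det = B i j % a
  rw [adj_std, det_std, tb_zero_right, mul_zero, tb_std]
  simp only [Matrix.add_apply, Matrix.smul_apply, Matrix.single_apply_same,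
    smul_eq_mul]
  rw [Int.emod_def]
  ring

lemma descentA {x : MZ} {a b : ℤ} {A : MatZ}
    (hmin : ∀ z, Reach x z → 0 < z.1 → a ≤ z.1) (ha : 0 < a)
    (hy : Reach x (a, b, A, 0)) : ∀ i j, a ∣ A i j := by
  intro i j
  by_contra hnd
  obtain ⟨C, hCadj, hCdet, s, t, hCst⟩ := exists_adjC i j
  refine descend hmin ha hnd ⟨phiMap C
    (psiMap (single s t (-1 - A i j / a)) (a, b, A, 0)),
    Reach.trans hy (Reach.trans (Reach.psi _ _) (Reach.phi _ _)), ?_⟩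
  rw [phi_first]
  show a + tb ((0:MatZ) + a • single s t (-1 - A i j / a)) C
      + tb (A + cross 0 (single s t (-1 - A i j / a))
          + a • (single s t (-1 - A i j / a)).adjugate) C.adjugate
      + _ * C.det = A i j % a
  rw [hCdet, mul_zero, cross_zero_left, adj_std, smul_zero, add_zero, add_zero, zero_add,
    hCadj, tb_std, tb_smul_left, tb_std_left, hCst]
  rw [Int.emod_def]
  ring

lemma descentb {x : MZ} {a b : ℤ} {A : MatZ}
    (hmin : ∀ z, Reach x z → 0 < z.1 → a ≤ z.1) (ha : 0 < a)
    (hy : Reach x (a, b, A, 0)) (hAd : ∀ i j, a ∣ A i j) : a ∣ b := by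
  by_contra hnd
  have hnd' : ¬ a ∣ -b := fun h => hnd ((dvd_neg).mp h)
  obtain ⟨a', hae⟩ := hAd 1 0
  obtain ⟨b', hbe⟩ := hAd 2 1
  obtain ⟨c', hce⟩ := hAd 0 2
  set k : ℤ := -(-b / a) with hk
  set yv : ℤ := 1 - c' with hyv
  set zv : ℤ := k - a' - b' * yv with hzv
  set C : MatZ := !![0,1,0;0,0,yv;zv,0,0] with hC
  have hCdet : C.det = yv * zv := by
    rw [hC, Matrix.det_fin_three]
    simp
  have htb : tb A C = A 1 0 + A 2 1 * yv + A 0 2 * zv := by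
    rw [tb, Matrix.trace, Fin.sum_univ_three]
    simp [Matrix.diag, Matrix.mul_apply, Fin.sum_univ_three, hC, Matrix.vecHead, Matrix.vecTail]
    ring
  refine descend hmin ha hnd' ⟨phiMap C (tauMap (a, b, A, 0)), 
    Reach.trans hy (Reach.trans (Reach.tau _) (Reach.phi _ _)), ?_⟩
  rw [phi_first]
  show -b + tb (A) C + tb (-(0:MatZ)) C.adjugate + a * C.det = -b % a
  rw [neg_zero, tb_zero_left, hCdet, htb, hae, hbe, hce]
  rw [Int.emod_def, hzv, hyv, hk]
  ring

-- ===== main theorem =====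

theorem reduction_aux (x : MZ) (hx : x ≠ 0) :
    ∃ g : MZ → MZ, ZWord g ∧ DiagReduced (g x) := by
  classical
  -- minimal positive reachable first coordinate
  have hTne : ∃ n : ℕ, 0 < n ∧ ∃ y, Reach x y ∧ y.1 = (n : ℤ) := by
    obtain ⟨y, hy, h0⟩ := reach_pos hx
    exact ⟨y.1.toNat, by omega, y, hy, by omega⟩
  set T : Set ℕ := {n | 0 < n ∧ ∃ y, Reach x y ∧ y.1 = (n : ℤ)} with hT
  have hTne' : T.Nonempty := by
    obtain ⟨n, h1, h2⟩ := hTne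
    exact ⟨n, h1, h2⟩
  have hmT : sInf T ∈ T := Nat.sInf_mem hTne'
  obtain ⟨hm0, y, hyr, hy1⟩ := hmT
  have hmin : ∀ z, Reach x z → 0 < z.1 → ((sInf T : ℕ) : ℤ) ≤ z.1 := by
    intro z hz h0
    have hzT : z.1.toNat ∈ T := ⟨by omega, z, hz, by omega⟩
    have := Nat.sInf_le hzT
    omega
  obtain ⟨a, b, A, B⟩ := y
  have ha : a = ((sInf T : ℕ) : ℤ) := hy1
  rw [← ha] at hmin
  have ha0 : 0 < a := by omega
  -- step 1 : a divides B, clear B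
  have hBd : ∀ i j, a ∣ B i j := descentB hmin ha0 hyr
  set D0 : MatZ := Matrix.of fun i j => -(B i j / a) with hD0
  have hB0 : B + a • D0 = 0 := by
    ext i j
    simp only [Matrix.add_apply, Matrix.smul_apply, hD0, Matrix.of_apply, smul_eq_mul,
      Matrix.zero_apply]
    rw [mul_neg, Int.mul_ediv_cancel' (hBd i j)]
    ring
  set b1 : ℤ := b + tb A D0 + tb B D0.adjugate + a * D0.det with hb1
  set A1 : MatZ := A + cross B D0 + a • D0.adjugate with hA1
  have hy1r : Reach x (a, b1, A1, 0) := by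
    have e : psiMap D0 (a, b, A, B) = (a, b1, A1, 0) := by
      show (a, b + tb A D0 + tb B D0.adjugate + a * D0.det,
        A + cross B D0 + a • D0.adjugate, B + a • D0) = (a, b1, A1, 0)
      rw [hB0, ← hb1, ← hA1]
    rw [← e]
    exact Reach.trans hyr (Reach.psi D0 _)
  -- step 2 : a divides A1, a divides b1
  have hAd : ∀ i j, a ∣ A1 i j := descentA hmin ha0 hy1r
  have hbd : a ∣ b1 := descentb hmin ha0 hy1r hAd
  -- step 3 : diagonalize A1
  obtain ⟨P, Q, hdet, d, hdiag⟩ := smithT A1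
  have hyfin : Reach x (Tmap P Q (a, b1, A1, 0)) :=
    Reach.trans hy1r ⟨Tmap P Q, ZWord.tmap P Q hdet, rfl⟩
  have heps : ((P : MatZ)).det * ((Q : MatZ)).det = 1 := by
    rw [hdet]
    rcases det_unit_pm Q with h | h <;> rw [h] <;> norm_num
  have hfin : Tmap P Q (a, b1, A1, 0) = (a, b1, Matrix.diagonal d, 0) := by
    show ((P : MatZ).det * (Q : MatZ).det * a, (P : MatZ).det * (Q : MatZ).det * b1,
      (P : MatZ) * A1 * ((Q⁻¹ : GL (Fin 3) ℤ) : MatZ),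
      (Q : MatZ) * 0 * ((P⁻¹ : GL (Fin 3) ℤ) : MatZ)) = (a, b1, Matrix.diagonal d, 0)
    rw [heps, hdiag, one_mul, one_mul, Matrix.mul_zero, Matrix.zero_mul]
  have hdd : ∀ i : Fin 3, a ∣ d i := by
    intro i
    have : d i = ((P : MatZ) * A1 * ((Q⁻¹ : GL (Fin 3) ℤ) : MatZ)) i i := by
      rw [hdiag, Matrix.diagonal_apply_eq]
    rw [this]
    exact dvd_PAQ hAd _ _ i i
  obtain ⟨g, hg, hgx⟩ := hyfin
  refine ⟨g, hg, a, b1, d 0, d 1, d 2, ?_, ha0, hbd, hdd 0, hdd 1, hdd 2⟩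
  rw [hgx, hfin, vec3_eta]


end FreudenthalZ

/-- **Reduction Lemma I**: every nonzero element of `M_ℤ` is equivalent to a diagonal
reduced element under a finite product of the elementary transformations. -/
theorem reduction_lemma_I (x : MZ) (hx : x ≠ 0) :
    ∃ g : MZ → MZ, ZWord g ∧ DiagReduced (g x) :=
  FreudenthalZ.reduction_aux x hx
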